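/- Let m ≤ n be positive integers and let T be an m×n complex matrix. Then T belongs to Refl((J_m, J_n)^Int), the reflexive cover of the space of intertwiners (J_m, J_n)^Int = {S ∈ M_{m×n}(ℂ) : J_m S = S J_n} (where an m×n matrix acts as a linear map ℂⁿ → ℂᵐ by matrix-vector multiplication), if and only if the first n − m columns of T are zero and the m×m submatrix formed by the last m columns of T is upper triangular. -/
import Mathlib


/-- The `n × n` nilpotent Jordan block. -/
def Jmat (n : ℕ) : Matrix (Fin n) (Fin n) ℂ :=
  Matrix.of fun i j => if (j : ℕ) = (i : ℕ) + 1 then 1 else 0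

lemma Jmat_mul_apply {m n : ℕ} (A : Matrix (Fin m) (Fin n) ℂ) (i : Fin m) (j : Fin n) :
    (Jmat m * A) i j = if h : (i : ℕ) + 1 < m then A ⟨(i : ℕ) + 1, h⟩ j else 0 := by
  rw [Matrix.mul_apply]
  split_ifs with h
  · rw [Finset.sum_eq_single (⟨(i : ℕ) + 1, h⟩ : Fin m)]
    · simp [Jmat]
    · intro k _ hk
      have : (k : ℕ) ≠ (i : ℕ) + 1 := fun he => hk (Fin.ext he)
      simp [Jmat, this]
    · simp
  · apply Finset.sum_eq_zero
    intro k _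
    have : (k : ℕ) ≠ (i : ℕ) + 1 := by have := k.isLt; omega
    simp [Jmat, this]

lemma mul_Jmat_apply {m n : ℕ} (A : Matrix (Fin m) (Fin n) ℂ) (i : Fin m) (j : Fin n) :
    (A * Jmat n) i j = if h : 1 ≤ (j : ℕ) then A i ⟨(j : ℕ) - 1, by have := j.isLt; omega⟩ else 0 := by
  rw [Matrix.mul_apply]
  split_ifs with h
  · rw [Finset.sum_eq_single (⟨(j : ℕ) - 1, by have := j.isLt; omega⟩ : Fin n)]
    · simp only [Jmat, Matrix.of_apply]
      rw [if_pos (by show (j : ℕ) = (j : ℕ) - 1 + 1; omega), mul_one]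
    · intro k _ hk
      have : (j : ℕ) ≠ (k : ℕ) + 1 := by
        intro he
        apply hk
        apply Fin.ext
        simp
        omega
      simp [Jmat, this]
    · simp
  · apply Finset.sum_eq_zero
    intro k _
    have : (j : ℕ) ≠ (k : ℕ) + 1 := by omega
    simp [Jmat, this]

lemma inter_vanish {m n : ℕ} (hm : 0 < m) (hmn : m ≤ n) (S : Matrix (Fin m) (Fin n) ℂ)
    (hS : Jmat m * S = S * Jmat n) :
    ∀ (i : Fin m) (j : Fin n), (j : ℕ) < n - m + (i : ℕ) → S i j = 0 := by
  suffices h : ∀ d (i : Fin m) (j : Fin n), m - 1 - (i : ℕ) = d →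
      (j : ℕ) < n - m + (i : ℕ) → S i j = 0 from fun i j => h _ i j rfl
  intro d
  induction d with
  | zero =>
    intro i j hi hj
    have hii := i.isLt
    have hjj := j.isLt
    have hj1 : (j : ℕ) + 1 < n := by omega
    have hkey := congrFun (congrFun hS i) ⟨(j : ℕ) + 1, hj1⟩
    rw [Jmat_mul_apply, mul_Jmat_apply, dif_neg (by omega), dif_pos (by simp)] at hkey
    have : (⟨((⟨(j : ℕ) + 1, hj1⟩ : Fin n) : ℕ) - 1, by omega⟩ : Fin n) = j := by
      apply Fin.ext; show (j : ℕ) + 1 - 1 = (j : ℕ); omega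
    rw [this] at hkey
    exact hkey.symm
  | succ d ih =>
    intro i j hi hj
    have hii := i.isLt
    have hjj := j.isLt
    have hi1 : (i : ℕ) + 1 < m := by omega
    have hj1 : (j : ℕ) + 1 < n := by omega
    have hkey := congrFun (congrFun hS i) ⟨(j : ℕ) + 1, hj1⟩
    rw [Jmat_mul_apply, mul_Jmat_apply, dif_pos hi1, dif_pos (by simp)] at hkey
    have he : (⟨((⟨(j : ℕ) + 1, hj1⟩ : Fin n) : ℕ) - 1, by omega⟩ : Fin n) = j := by
      apply Fin.ext; show (j : ℕ) + 1 - 1 = (j : ℕ); omega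
    rw [he] at hkey
    rw [← hkey]
    exact ih ⟨(i : ℕ) + 1, hi1⟩ ⟨(j : ℕ) + 1, hj1⟩ (by simp; omega) (by simp; omega)

def Smat (m n : ℕ) (b : ℕ → ℂ) : Matrix (Fin m) (Fin n) ℂ :=
  Matrix.of fun i j => if n - m + (i : ℕ) ≤ (j : ℕ) then b ((j : ℕ) - (n - m) - (i : ℕ)) else 0

lemma Smat_inter {m n : ℕ} (hm : 0 < m) (hmn : m ≤ n) (b : ℕ → ℂ) :
    Jmat m * Smat m n b = Smat m n b * Jmat n := by
  ext i j
  have hii := i.isLt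
  have hjj := j.isLt
  rw [Jmat_mul_apply, mul_Jmat_apply]
  split_ifs with h1 h2 h2
  · show (if n - m + ((i:ℕ)+1) ≤ (j:ℕ) then b ((j:ℕ) - (n-m) - ((i:ℕ)+1)) else 0)
      = (if n - m + (i:ℕ) ≤ (j:ℕ) - 1 then b ((j:ℕ) - 1 - (n-m) - (i:ℕ)) else 0)
    split_ifs with h3 h4
    · congr 1; omega
    · omega
    · omega
    · rfl
  · show (if n - m + ((i:ℕ)+1) ≤ (j:ℕ) then b ((j:ℕ) - (n-m) - ((i:ℕ)+1)) else 0) = 0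
    rw [if_neg (by omega)]
  · show (0 : ℂ) = (if n - m + (i:ℕ) ≤ (j:ℕ) - 1 then b ((j:ℕ) - 1 - (n-m) - (i:ℕ)) else 0)
    rw [if_neg (by omega)]
  · rfl

noncomputable def Bseq (Y G : ℕ → ℂ) (l : ℕ) : ℕ → ℂ
  | e => (G (l - e) - ∑ f ∈ (Finset.range e).attach,
      Bseq Y G l f.1 * Y (l - e + f.1)) / Y l
decreasing_by exact Finset.mem_range.mp f.2

lemma Bseq_spec (Y G : ℕ → ℂ) (l : ℕ) (hl : Y l ≠ 0) (e : ℕ) (he : e ≤ l) :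
    ∑ f ∈ Finset.range (e + 1), Bseq Y G l f * Y (l - e + f) = G (l - e) := by
  rw [Finset.sum_range_succ]
  have h1 : l - e + e = l := by omega
  rw [h1]
  conv_lhs => rw [Bseq]
  rw [Finset.sum_attach (Finset.range e) (fun f => Bseq Y G l f * Y (l - e + f))]
  rw [div_mul_cancel₀ _ hl]
  ring

lemma Bseq_eval (Y G : ℕ → ℂ) (l m : ℕ) (hl : Y l ≠ 0) (hY : ∀ j, l < j → Y j = 0)
    (hG : ∀ i, l < i → G i = 0) (hlm : l < m) (i : ℕ) (him : i < m) :
    ∑ f ∈ Finset.range (m - i), Bseq Y G l f * Y (i + f) = G i := by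
  by_cases hi : i ≤ l
  · have hspec := Bseq_spec Y G l hl (l - i) (by omega)
    have hle : l - (l - i) = i := by omega
    rw [hle] at hspec
    rw [← hspec]
    refine (Finset.sum_subset ?_ ?_).symm
    · intro f hf
      simp only [Finset.mem_range] at *
      omega
    · intro f hf hnf
      simp only [Finset.mem_range] at hf hnf
      rw [hY (i + f) (by omega), mul_zero]
  · rw [hG i (by omega)]
    apply Finset.sum_eq_zero
    intro f _
    rw [hY (i + f) (by omega), mul_zero]

lemma mulVec_expand {m n : ℕ} (hmn : m ≤ n) (A : Matrix (Fin m) (Fin n) ℂ)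
    (hA : ∀ (i : Fin m) (j : Fin n), (j : ℕ) < n - m + (i : ℕ) → A i j = 0)
    (x : Fin n → ℂ) (i : Fin m) :
    A.mulVec x i = ∑ f ∈ Finset.range (m - (i : ℕ)),
      (fun k => if h : k < n then A i ⟨k, h⟩ * x ⟨k, h⟩ else 0) (n - m + (i : ℕ) + f) := by
  classical
  have hii := i.isLt
  set g : ℕ → ℂ := fun k => if h : k < n then A i ⟨k, h⟩ * x ⟨k, h⟩ else 0 with hg
  have h1 : A.mulVec x i = ∑ j ∈ Finset.range n, g j := by
    rw [← Fin.sum_univ_eq_sum_range g n]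
    rw [Matrix.mulVec, dotProduct]
    apply Finset.sum_congr rfl
    intro j _
    simp [hg, j.isLt]
  rw [h1]
  have h2 : ∑ j ∈ Finset.range n, g j = ∑ j ∈ Finset.Ico (n - m + (i : ℕ)) n, g j := by
    refine (Finset.sum_subset ?_ ?_).symm
    · intro k hk
      simp only [Finset.mem_Ico, Finset.mem_range] at *
      omega
    · intro k hk hnk
      simp only [Finset.mem_Ico, Finset.mem_range] at hk hnk
      have hk2 : k < n - m + (i : ℕ) := by omega
      simp only [hg, dif_pos hk]
      rw [hA i ⟨k, hk⟩ hk2, zero_mul]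
  rw [h2, Finset.sum_Ico_eq_sum_range,
    show n - (n - m + (i : ℕ)) = m - (i : ℕ) by omega]

theorem stmt11 (m n : ℕ) (hm : 0 < m) (hmn : m ≤ n) (T : Matrix (Fin m) (Fin n) ℂ) :
    (∀ x : Fin n → ℂ, ∃ S : Matrix (Fin m) (Fin n) ℂ,
        Jmat m * S = S * Jmat n ∧ T.mulVec x = S.mulVec x) ↔
      ((∀ (i : Fin m) (j : Fin n), (j : ℕ) < n - m → T i j = 0) ∧
        (∀ i j : Fin m, (j : ℕ) < (i : ℕ) → T i ⟨n - m + (j : ℕ), by omega⟩ = 0)) := by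
  constructor
  · intro H
    constructor
    · intro i j hj
      obtain ⟨S, hS, hTx⟩ := H (Pi.single j 1)
      have h1 : T i j = S i j := by simpa using congrFun hTx i
      rw [h1]
      exact inter_vanish hm hmn S hS i j (by omega)
    · intro i j hij
      obtain ⟨S, hS, hTx⟩ := H (Pi.single ⟨n - m + (j : ℕ), by omega⟩ 1)
      have h1 : T i ⟨n - m + (j : ℕ), by omega⟩ = S i ⟨n - m + (j : ℕ), by omega⟩ := by
        simpa using congrFun hTx i
      rw [h1]
      refine inter_vanish hm hmn S hS i _ ?_
      show n - m + (j : ℕ) < n - m + (i : ℕ)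
      omega
  · rintro ⟨h1, h2⟩ x
    classical
    have hT : ∀ (i : Fin m) (j : Fin n), (j : ℕ) < n - m + (i : ℕ) → T i j = 0 := by
      intro i j hj
      by_cases hc : (j : ℕ) < n - m
      · exact h1 i j hc
      · have hji : (j : ℕ) - (n - m) < (i : ℕ) := by omega
        have h3 := h2 i ⟨(j : ℕ) - (n - m), by omega⟩ hji
        have he : (⟨n - m + ((j : ℕ) - (n - m)), by omega⟩ : Fin n) = j := by
          apply Fin.ext
          show n - m + ((j : ℕ) - (n - m)) = (j : ℕ)
          omega
        rwa [he] at h3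
    set Y : ℕ → ℂ := fun k => if h : n - m + k < n then x ⟨n - m + k, h⟩ else 0 with hYdef
    have hYx : ∀ (k : ℕ) (hk : n - m + k < n), Y k = x ⟨n - m + k, hk⟩ := fun k hk => dif_pos hk
    by_cases hzero : ∀ k, Y k = 0
    · refine ⟨0, by simp, ?_⟩
      rw [Matrix.zero_mulVec]
      funext i
      have hii := i.isLt
      rw [mulVec_expand hmn T hT x i]
      show (∑ f ∈ Finset.range (m - (i : ℕ)), _) = (0 : ℂ)
      apply Finset.sum_eq_zero
      intro f hf
      simp only [Finset.mem_range] at hf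
      have hk : n - m + (i : ℕ) + f < n := by omega
      simp only [dif_pos hk]
      have hx0 : x ⟨n - m + (i : ℕ) + f, hk⟩ = 0 := by
        have hy := hzero ((i : ℕ) + f)
        rw [hYx ((i : ℕ) + f) (by omega)] at hy
        rw [← hy]
        congr 1
        exact Fin.ext (by show n - m + (i : ℕ) + f = n - m + ((i : ℕ) + f); omega)
      rw [hx0, mul_zero]
    · push_neg at hzero
      obtain ⟨k0, hk0⟩ := hzero
      have hk0m : k0 < m := by
        by_contra hc
        exact hk0 (dif_neg (by omega))
      set l := Nat.findGreatest (fun k => Y k ≠ 0) m with hldef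
      have hl : Y l ≠ 0 := by
        rw [hldef]
        exact Nat.findGreatest_spec (P := fun k => Y k ≠ 0) (le_of_lt hk0m) hk0
      have hlm : l < m := by
        have hle : l ≤ m := Nat.findGreatest_le m
        rcases lt_or_eq_of_le hle with h | h
        · exact h
        · exfalso
          apply hl
          rw [h]
          exact dif_neg (by omega)
      have hY : ∀ j, l < j → Y j = 0 := by
        intro j hj
        by_cases hjm : j ≤ m
        · by_contra hne
          exact (Nat.findGreatest_is_greatest (P := fun k => Y k ≠ 0) (by rw [hldef] at hj; exact hj) hjm) hne
        · exact dif_neg (by omega)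
      set G : ℕ → ℂ := fun i => if h : i < m then T.mulVec x ⟨i, h⟩ else 0 with hGdef
      have hG : ∀ i, l < i → G i = 0 := by
        intro i0 hi0
        simp only [hGdef]
        split_ifs with h
        · rw [mulVec_expand hmn T hT x ⟨i0, h⟩]
          apply Finset.sum_eq_zero
          intro f hf
          simp only [Finset.mem_range] at hf
          have hf2 : f < m - i0 := hf
          have hk : n - m + i0 + f < n := by omega
          show (if hc : n - m + (↑(⟨i0, h⟩ : Fin m)) + f < n then _ * x ⟨_, hc⟩ else 0) = 0
          simp only [dif_pos (show n - m + (↑(⟨i0, h⟩ : Fin m)) + f < n from hk)]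
          have hx0 : x ⟨n - m + i0 + f, hk⟩ = 0 := by
            have hy := hY (i0 + f) (by omega)
            rw [hYx (i0 + f) (by omega)] at hy
            rw [← hy]
            congr 1
            exact Fin.ext (by show n - m + i0 + f = n - m + (i0 + f); omega)
          rw [hx0, mul_zero]
        · rfl
      refine ⟨Smat m n (Bseq Y G l), Smat_inter hm hmn _, ?_⟩
      funext i
      have hii := i.isLt
      have hSA : ∀ (i : Fin m) (j : Fin n), (j : ℕ) < n - m + (i : ℕ) →
          Smat m n (Bseq Y G l) i j = 0 := by
        intro i j hj
        show (if n - m + (i : ℕ) ≤ (j : ℕ) then _ else (0 : ℂ)) = 0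
        rw [if_neg (by omega)]
      rw [mulVec_expand hmn (Smat m n (Bseq Y G l)) hSA x i]
      have hTi : T.mulVec x i = G (i : ℕ) := by
        simp only [hGdef]
        rw [dif_pos hii]
      rw [hTi, ← Bseq_eval Y G l m hl hY hG hlm (i : ℕ) hii]
      apply Finset.sum_congr rfl
      intro f hf
      simp only [Finset.mem_range] at hf
      have hk : n - m + (i : ℕ) + f < n := by omega
      simp only [dif_pos hk]
      show Bseq Y G l f * Y ((i : ℕ) + f) =
        (if n - m + (i : ℕ) ≤ n - m + (i : ℕ) + f
          then Bseq Y G l (n - m + (i : ℕ) + f - (n - m) - (i : ℕ)) else 0) * x ⟨n - m + (i : ℕ) + f, hk⟩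
      rw [if_pos (by omega), show n - m + (i : ℕ) + f - (n - m) - (i : ℕ) = f by omega]
      congr 1
      rw [hYx ((i : ℕ) + f) (by omega)]
      congr 1
      exact Fin.ext (by show n - m + ((i : ℕ) + f) = n - m + (i : ℕ) + f; omega)
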